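/- Let n ≥ 2 and N = 2^n + 2. An n-element set A of positive integers is sumset-distinct modulo N if and only if one of the following holds: (i) A contains exactly one odd element a, every element of A \ {a} is even, and the (n-1)-element set { b/2 : b ∈ A \ {a} } is sumset-distinct modulo N/2 = 2^{n-1} + 1; or (ii) A contains an element c with c ≡ N/2 (mod N) and the (n-1)-element set A \ {c} is sumset-distinct modulo N/2 = 2^{n-1} + 1. -/

import Mathlib

/-- An `n`-element set `A` of positive integers is *sumset-distinct modulo `N`*
if all subset sums (including the empty sum) are pairwise distinct modulo `N`. -/
def SumsetDistinctMod (N : ℕ) (A : Finset ℕ) : Prop :=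
  ∀ B ⊆ A, ∀ C ⊆ A, (∑ x ∈ B, x) % N = (∑ x ∈ C, x) % N → B = C

open Polynomial Finset



/-- reduction of exponents mod M -/
lemma dvd_X_pow_sub_X_pow_mod {R : Type*} [CommRing R] (M j : ℕ) :
    (X ^ M - 1 : R[X]) ∣ X ^ j - X ^ (j % M) := by
  have h : X ^ j - X ^ (j % M) = X ^ (j % M) * ((X ^ M) ^ (j / M) - (1 : R[X]) ^ (j / M)) := by
    rw [mul_sub, ← pow_mul, ← pow_add, one_pow, mul_one, Nat.mod_add_div]
  rw [h]
  exact Dvd.dvd.mul_left (sub_dvd_pow_sub_pow _ 1 _) _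

/-- gcd divisibility lemma -/
lemma dvd_X_pow_gcd_sub_one {R : Type*} [CommRing R] (f : R[X]) :
    ∀ u v : ℕ, f ∣ X ^ u - 1 → f ∣ X ^ v - 1 → f ∣ X ^ Nat.gcd u v - 1 := by
  intro u
  induction u using Nat.strong_induction_on with
  | _ u ih =>
    intro v hu hv
    rcases Nat.eq_zero_or_pos u with h0 | h0
    · subst h0; simpa [Nat.gcd_zero_left] using hv
    · rw [Nat.gcd_rec]
      refine ih (v % u) (Nat.mod_lt _ h0) u ?_ hu
      have h1 : f ∣ X ^ v - X ^ (v % u) := hu.trans (dvd_X_pow_sub_X_pow_mod u v)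
      have : (X ^ (v % u) - 1 : R[X]) = (X ^ v - 1) - (X ^ v - X ^ (v % u)) := by ring
      rw [this]; exact dvd_sub hv h1




lemma eq_of_erase_eq (c : ℕ) {B C : Finset ℕ} (h1 : B.erase c = C.erase c)
    (h2 : (c ∈ B) = (c ∈ C)) : B = C := by
  ext x
  by_cases hx : x = c
  · subst hx; exact iff_of_eq h2
  · constructor <;> intro hxx
    · have : x ∈ B.erase c := Finset.mem_erase.2 ⟨hx, hxx⟩
      rw [h1] at this; exact (Finset.mem_erase.1 this).2
    · have : x ∈ C.erase c := Finset.mem_erase.2 ⟨hx, hxx⟩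
      rw [← h1] at this; exact (Finset.mem_erase.1 this).2

lemma sum_erase_ite (c : ℕ) (B : Finset ℕ) :
    ∑ x ∈ B, x = (∑ x ∈ B.erase c, x) + if c ∈ B then c else 0 := by
  split
  · next hmem => rw [Finset.sum_erase_add _ _ hmem]
  · next hmem => rw [add_zero, Finset.erase_eq_of_notMem hmem]


lemma back_i (M : ℕ) (hM : 0 < M) (A : Finset ℕ) (a : ℕ) (ha : a ∈ A) (hao : Odd a)
    (hev : ∀ b ∈ A, b ≠ a → Even b)
    (hSD : SumsetDistinctMod M ((A.erase a).image (fun b => b / 2))) :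
    SumsetDistinctMod (2 * M) A := by
  intro B hB C hC h
  have hBev : ∀ x ∈ B.erase a, Even x := fun x hx =>
    hev x (hB (Finset.mem_of_mem_erase hx)) (Finset.ne_of_mem_erase hx)
  have hCev : ∀ x ∈ C.erase a, Even x := fun x hx =>
    hev x (hC (Finset.mem_of_mem_erase hx)) (Finset.ne_of_mem_erase hx)
  -- parity: membership of a in B equals membership in C
  have hpar : ∀ (D : Finset ℕ), (∀ x ∈ D.erase a, Even x) →
      (∑ x ∈ D, x) % 2 = (if a ∈ D then 1 else 0) := by
    intro D hDev
    rw [sum_erase_ite a D]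
    rcases (Finset.even_sum _ hDev : Even (∑ x ∈ D.erase a, x)) with ⟨k, hk⟩
    rcases hao with ⟨m, hm⟩
    split <;> omega
  have h2 : (∑ x ∈ B, x) % 2 = (∑ x ∈ C, x) % 2 := by
    have hdvd : (2:ℕ) ∣ 2 * M := ⟨M, rfl⟩
    have := (Nat.ModEq.of_dvd hdvd (h : (∑ x ∈ B, x) ≡ (∑ x ∈ C, x) [MOD 2*M]))
    exact this
  have hmem : (a ∈ B) = (a ∈ C) := by
    rw [hpar B hBev, hpar C hCev] at h2
    by_cases h1 : a ∈ B <;> by_cases h3 : a ∈ C <;> simp [h1, h3] at h2 ⊢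
  -- cancel a
  have hBC' : (∑ x ∈ B.erase a, x) ≡ (∑ x ∈ C.erase a, x) [MOD 2 * M] := by
    have h' : (∑ x ∈ B, x) ≡ (∑ x ∈ C, x) [MOD 2*M] := h
    have hiff := iff_of_eq hmem
    have hite : (if a ∈ B then a else 0) = (if a ∈ C then a else 0) := by
      by_cases h1 : a ∈ B
      · simp [h1, hiff.1 h1]
      · simp [h1, mt hiff.2 h1]
    rw [sum_erase_ite a B, sum_erase_ite a C, hite] at h'
    exact Nat.ModEq.add_right_cancel' _ h'
  -- pass to halves
  have hinj : ∀ (D : Finset ℕ), (∀ x ∈ D, Even x) →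
      Set.InjOn (fun b => b / 2) D := by
    intro D hDev x hx y hy hxy
    rcases hDev x hx with ⟨u, hu⟩
    rcases hDev y hy with ⟨v, hv⟩
    simp only at hxy
    omega
  have hsum2 : ∀ (D : Finset ℕ), (∀ x ∈ D, Even x) →
      2 * (∑ y ∈ D.image (fun b => b / 2), y) = ∑ x ∈ D, x := by
    intro D hDev
    rw [Finset.sum_image (fun x hx y hy => hinj D hDev hx hy), Finset.mul_sum]
    refine Finset.sum_congr rfl (fun x hx => ?_)
    exact Nat.mul_div_cancel' (hDev x hx).two_dvd
  have himgmod : (∑ y ∈ (B.erase a).image (fun b => b / 2), y) ≡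
      (∑ y ∈ (C.erase a).image (fun b => b / 2), y) [MOD M] := by
    have hint := (Nat.modEq_iff_dvd.1 hBC')
    have e1 : ((∑ x ∈ B.erase a, x : ℕ) : ℤ) =
        2 * ((∑ y ∈ (B.erase a).image (fun b => b / 2), y : ℕ) : ℤ) := by
      exact_mod_cast congrArg (Nat.cast (R := ℤ)) (hsum2 _ hBev).symm
    have e2 : ((∑ x ∈ C.erase a, x : ℕ) : ℤ) =
        2 * ((∑ y ∈ (C.erase a).image (fun b => b / 2), y : ℕ) : ℤ) := by
      exact_mod_cast congrArg (Nat.cast (R := ℤ)) (hsum2 _ hCev).symm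
    rw [e1, e2] at hint
    refine Nat.modEq_iff_dvd.2 ?_
    have h2M : ((2:ℤ) * M) ∣ 2 * (((∑ y ∈ (C.erase a).image (fun b => b / 2), y : ℕ) : ℤ) -
        ((∑ y ∈ (B.erase a).image (fun b => b / 2), y : ℕ) : ℤ)) := by
      rw [mul_sub]
      exact_mod_cast hint
    exact (mul_dvd_mul_iff_left (two_ne_zero (α := ℤ))).1 h2M
  have himgsub : ∀ (D : Finset ℕ), D ⊆ A →
      (D.erase a).image (fun b => b / 2) ⊆ (A.erase a).image (fun b => b / 2) :=
    fun D hD => Finset.image_subset_image (Finset.erase_subset_erase _ hD)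
  have himg : (B.erase a).image (fun b => b / 2) = (C.erase a).image (fun b => b / 2) :=
    hSD _ (himgsub B hB) _ (himgsub C hC) himgmod
  -- recover erase equality
  have herase : B.erase a = C.erase a := by
    ext x
    constructor <;> intro hx
    · have hxe : Even x := hBev x hx
      have : x / 2 ∈ (C.erase a).image (fun b => b / 2) := by
        rw [← himg]; exact Finset.mem_image_of_mem _ hx
      rcases Finset.mem_image.1 this with ⟨y, hy, hyx⟩
      have hye : Even y := hCev y hy
      have : y = x := by rcases hxe with ⟨u,hu⟩; rcases hye with ⟨v,hv⟩; omega
      rwa [← this]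
    · have hxe : Even x := hCev x hx
      have : x / 2 ∈ (B.erase a).image (fun b => b / 2) := by
        rw [himg]; exact Finset.mem_image_of_mem _ hx
      rcases Finset.mem_image.1 this with ⟨y, hy, hyx⟩
      have hye : Even y := hBev y hy
      have : y = x := by rcases hxe with ⟨u,hu⟩; rcases hye with ⟨v,hv⟩; omega
      rwa [← this]
  exact eq_of_erase_eq a herase hmem



-- parity toggle: evens and odds among subsets are equinumerous
lemma card_even_eq_card_odd (A : Finset ℕ) (a : ℕ) (ha : a ∈ A) (hao : Odd a) :
    (A.powerset.filter (fun B => Even (∑ x ∈ B, x))).card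
      = (A.powerset.filter (fun B => ¬ Even (∑ x ∈ B, x))).card := by
  have key : ∀ B ∈ A.powerset.filter (fun B => Even (∑ x ∈ B, x)),
      (if a ∈ B then B.erase a else insert a B) ∈
        A.powerset.filter (fun B => ¬ Even (∑ x ∈ B, x)) := by
    intro B hB
    rw [Finset.mem_filter, Finset.mem_powerset] at hB ⊢
    obtain ⟨hBA, hBev⟩ := hB
    by_cases hmem : a ∈ B
    · rw [if_pos hmem]
      refine ⟨(Finset.erase_subset _ _).trans hBA, ?_⟩
      have hs := Finset.sum_erase_add B id hmem
      simp only [id] at hs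
      rcases hao with ⟨m, hm⟩
      rcases hBev with ⟨k, hk⟩
      rw [Nat.even_iff]; omega
    · rw [if_neg hmem]
      refine ⟨Finset.insert_subset ha hBA, ?_⟩
      rw [Finset.sum_insert hmem]
      rcases hao with ⟨m, hm⟩
      rcases hBev with ⟨k, hk⟩
      rw [Nat.even_iff]; omega
  have key2 : ∀ B ∈ A.powerset.filter (fun B => ¬ Even (∑ x ∈ B, x)),
      (if a ∈ B then B.erase a else insert a B) ∈
        A.powerset.filter (fun B => Even (∑ x ∈ B, x)) := by
    intro B hB
    rw [Finset.mem_filter, Finset.mem_powerset] at hB ⊢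
    obtain ⟨hBA, hBev⟩ := hB
    rw [Nat.not_even_iff] at hBev
    by_cases hmem : a ∈ B
    · rw [if_pos hmem]
      refine ⟨(Finset.erase_subset _ _).trans hBA, ?_⟩
      have hs := Finset.sum_erase_add B id hmem
      simp only [id] at hs
      rcases hao with ⟨m, hm⟩
      rw [Nat.even_iff]; omega
    · rw [if_neg hmem]
      refine ⟨Finset.insert_subset ha hBA, ?_⟩
      rw [Finset.sum_insert hmem]
      rcases hao with ⟨m, hm⟩
      rw [Nat.even_iff]; omega
  have hinv : ∀ B : Finset ℕ,
      (if a ∈ (if a ∈ B then B.erase a else insert a B) then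
        (if a ∈ B then B.erase a else insert a B).erase a
        else insert a (if a ∈ B then B.erase a else insert a B)) = B := by
    intro B
    by_cases hmem : a ∈ B
    · rw [if_pos hmem, if_neg (Finset.notMem_erase a B), Finset.insert_erase hmem]
    · rw [if_neg hmem, if_pos (Finset.mem_insert_self a B), Finset.erase_insert hmem]
  exact Finset.card_bij' (fun B _ => if a ∈ B then B.erase a else insert a B)
    (fun B _ => if a ∈ B then B.erase a else insert a B)
    key key2 (fun B _ => hinv B) (fun B _ => hinv B)



lemma exists_missing {M : ℕ} [NeZero M] (E : Finset (Finset ℕ))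
    (hinj : ∀ B ∈ E, ∀ C ∈ E,
      ((∑ x ∈ B, x : ℕ) : ZMod M) = ((∑ x ∈ C, x : ℕ) : ZMod M) → B = C)
    (hcardE : E.card = M - 1) (hM : 1 ≤ M) :
    ∃ m₀ : ZMod M, E.image (fun B => ((∑ x ∈ B, x : ℕ) : ZMod M))
      = Finset.univ.erase m₀ := by
  set img := E.image (fun B => ((∑ x ∈ B, x : ℕ) : ZMod M)) with himg
  have hcardimg : img.card = M - 1 := by
    rw [himg, Finset.card_image_of_injOn (fun B hB C hC h => hinj B hB C hC h), hcardE]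
  have hcarduniv : (Finset.univ : Finset (ZMod M)).card = M := by
    rw [Finset.card_univ, ZMod.card]
  have hsd : ((Finset.univ : Finset (ZMod M)) \ img).card = 1 := by
    rw [Finset.card_sdiff_of_subset (Finset.subset_univ _), hcarduniv, hcardimg]
    omega
  rcases Finset.card_eq_one.1 hsd with ⟨m₀, hm₀⟩
  refine ⟨m₀, ?_⟩
  have : img = Finset.univ \ (Finset.univ \ img) :=
    (Finset.sdiff_sdiff_eq_self (Finset.subset_univ _)).symm
  rw [this, hm₀, ← Finset.erase_eq]

lemma sum_image_missing {M : ℕ} [NeZero M] {R : Type*} [CommRing R]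
    (E : Finset (Finset ℕ)) (m₀ : ZMod M)
    (himg : E.image (fun B => ((∑ x ∈ B, x : ℕ) : ZMod M)) = Finset.univ.erase m₀)
    (hinj : ∀ B ∈ E, ∀ C ∈ E,
      ((∑ x ∈ B, x : ℕ) : ZMod M) = ((∑ x ∈ C, x : ℕ) : ZMod M) → B = C) :
    ∑ B ∈ E, (X : R[X]) ^ ((∑ x ∈ B, x) % M)
      = (∑ j ∈ (Finset.univ : Finset (ZMod M)), X ^ j.val) - X ^ m₀.val := by
  have hexp : ∀ B : Finset ℕ, (∑ x ∈ B, x) % M = ((∑ x ∈ B, x : ℕ) : ZMod M).val := by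
    intro B; rw [ZMod.val_natCast]
  calc ∑ B ∈ E, (X : R[X]) ^ ((∑ x ∈ B, x) % M)
      = ∑ B ∈ E, (X : R[X]) ^ (((∑ x ∈ B, x : ℕ) : ZMod M)).val := by
        refine Finset.sum_congr rfl (fun B _ => by rw [hexp])
    _ = ∑ j ∈ E.image (fun B => ((∑ x ∈ B, x : ℕ) : ZMod M)), (X : R[X]) ^ j.val := by
        rw [Finset.sum_image (fun B hB C hC h => hinj B hB C hC h)]
    _ = ∑ j ∈ Finset.univ.erase m₀, (X : R[X]) ^ j.val := by rw [himg]
    _ = _ := Finset.sum_erase_eq_sub (Finset.mem_univ m₀)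
lemma key_identity {R : Type*} [CommRing R] (A : Finset ℕ) (γ : ℕ → R[X]) (M : ℕ) :
    (X ^ M - 1 : R[X]) ∣ (∏ x ∈ A, (γ x * X ^ x + 1))
      - ∑ B ∈ A.powerset, (∏ x ∈ B, γ x) * X ^ ((∑ x ∈ B, x) % M) := by
  rw [Finset.prod_add]
  simp only [Finset.prod_const_one, mul_one]
  rw [← Finset.sum_sub_distrib]
  refine Finset.dvd_sum (fun B hB => ?_)
  have h1 : (∏ x ∈ B, (γ x * X ^ x)) = (∏ x ∈ B, γ x) * X ^ (∑ x ∈ B, x) := by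
    rw [Finset.prod_mul_distrib, Finset.prod_pow_eq_pow_sum]
  rw [h1, ← mul_sub]
  exact Dvd.dvd.mul_left (dvd_X_pow_sub_X_pow_mod M _) _

lemma main_k2 (n M : ℕ) (hn : 2 ≤ n) (hM : M = 2 ^ (n - 1) + 1)
    (A : Finset ℕ) (hcard : A.card = n)
    (hSD : SumsetDistinctMod (2 * M) A)
    (a b : ℕ) (ha : a ∈ A) (hb : b ∈ A) (hab : a ≠ b) (hao : Odd a) (hbo : Odd b) :
    ∃ c ∈ A, c % (2 * M) = M := by
  have hpow : 2 ^ n = 2 * 2 ^ (n - 1) := by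
    have hn1 : n - 1 + 1 = n := by omega
    calc 2 ^ n = 2 ^ (n - 1 + 1) := by rw [hn1]
    _ = 2 ^ (n - 1) * 2 := pow_succ 2 (n - 1)
    _ = 2 * 2 ^ (n - 1) := by ring
  have hMpos : 0 < M := by omega
  have hModd : Odd M := by
    rw [hM, Nat.odd_iff]
    have h1 : 1 ≤ n - 1 := by omega
    have : 2 ^ (n - 1) % 2 = 0 := by
      rcases Nat.exists_eq_add_of_le h1 with ⟨k, hk⟩
      rw [hk, pow_add, pow_one]
      omega
    omega
  haveI : NeZero M := ⟨by omega⟩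
  -- combined injectivity
  have key : ∀ B ⊆ A, ∀ C ⊆ A, (Even (∑ x ∈ B, x) ↔ Even (∑ x ∈ C, x)) →
      ((∑ x ∈ B, x : ℕ) : ZMod M) = ((∑ x ∈ C, x : ℕ) : ZMod M) → B = C := by
    intro B hB C hC hpar hmod
    have h2 : (∑ x ∈ B, x) ≡ (∑ x ∈ C, x) [MOD 2] := by
      show (∑ x ∈ B, x) % 2 = (∑ x ∈ C, x) % 2
      by_cases hE : Even (∑ x ∈ B, x)
      · have hE2 := hpar.1 hE
        rw [Nat.even_iff] at hE hE2; omega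
      · have hE2 := mt hpar.2 hE
        rw [Nat.not_even_iff] at hE hE2; omega
    have hMM : (∑ x ∈ B, x) ≡ (∑ x ∈ C, x) [MOD M] :=
      (ZMod.natCast_eq_natCast_iff _ _ _).1 hmod
    exact hSD B hB C hC
      ((Nat.modEq_and_modEq_iff_modEq_mul (Nat.coprime_two_left.2 hModd)).1 ⟨h2, hMM⟩)
  set E := A.powerset.filter (fun B => Even (∑ x ∈ B, x)) with hE
  set O := A.powerset.filter (fun B => ¬ Even (∑ x ∈ B, x)) with hO
  have hEO : E.card = O.card := card_even_eq_card_odd A a ha hao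
  have hsumcard : E.card + O.card = 2 ^ n := by
    rw [hE, hO, Finset.card_filter_add_card_filter_not, Finset.card_powerset, hcard]
  have hEcard : E.card = M - 1 := by omega
  have hOcard : O.card = M - 1 := by omega
  have hinjE : ∀ B ∈ E, ∀ C ∈ E,
      ((∑ x ∈ B, x : ℕ) : ZMod M) = ((∑ x ∈ C, x : ℕ) : ZMod M) → B = C := by
    intro B hB C hC h
    rw [hE, Finset.mem_filter, Finset.mem_powerset] at hB hC
    exact key B hB.1 C hC.1 (iff_of_true hB.2 hC.2) h
  have hinjO : ∀ B ∈ O, ∀ C ∈ O,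
      ((∑ x ∈ B, x : ℕ) : ZMod M) = ((∑ x ∈ C, x : ℕ) : ZMod M) → B = C := by
    intro B hB C hC h
    rw [hO, Finset.mem_filter, Finset.mem_powerset] at hB hC
    exact key B hB.1 C hC.1 (iff_of_false hB.2 hC.2) h
  obtain ⟨m₀, himgE⟩ := exists_missing E hinjE hEcard hMpos
  obtain ⟨m₁, himgO⟩ := exists_missing O hinjO hOcard hMpos
  -- ============ Lemma B : m₀ = m₁ via derivative trick over ℤ ============
  have hm01 : m₀ = m₁ := by
    have hdvd := key_identity A (fun x => (-1 : ℤ[X]) ^ x) M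
    have hPred : ∑ B ∈ A.powerset, (∏ x ∈ B, (-1 : ℤ[X]) ^ x) * X ^ ((∑ x ∈ B, x) % M)
        = X ^ m₁.val - X ^ m₀.val := by
      rw [← Finset.sum_filter_add_sum_filter_not A.powerset (fun B => Even (∑ x ∈ B, x))]
      have hEpart : ∑ B ∈ E, (∏ x ∈ B, (-1 : ℤ[X]) ^ x) * X ^ ((∑ x ∈ B, x) % M)
          = (∑ j ∈ (Finset.univ : Finset (ZMod M)), (X : ℤ[X]) ^ j.val) - X ^ m₀.val := by
        rw [← sum_image_missing E m₀ himgE hinjE]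
        refine Finset.sum_congr rfl (fun B hB => ?_)
        rw [hE, Finset.mem_filter] at hB
        rw [Finset.prod_pow_eq_pow_sum, hB.2.neg_one_pow, one_mul]
      have hOpart : ∑ B ∈ O, (∏ x ∈ B, (-1 : ℤ[X]) ^ x) * X ^ ((∑ x ∈ B, x) % M)
          = -((∑ j ∈ (Finset.univ : Finset (ZMod M)), (X : ℤ[X]) ^ j.val) - X ^ m₁.val) := by
        rw [← sum_image_missing O m₁ himgO hinjO, ← Finset.sum_neg_distrib]
        refine Finset.sum_congr rfl (fun B hB => ?_)
        rw [hO, Finset.mem_filter] at hB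
        rw [Finset.prod_pow_eq_pow_sum, (Nat.not_even_iff_odd.1 hB.2).neg_one_pow]
        ring
      rw [hEpart, hOpart]
      ring
    rw [hPred] at hdvd
    obtain ⟨Q, hQ⟩ := hdvd
    -- factor out the two odd elements
    have hbmem : b ∈ A.erase a := Finset.mem_erase.2 ⟨fun h => hab h.symm, hb⟩
    have hPfac : (∏ x ∈ A, ((-1 : ℤ[X]) ^ x * X ^ x + 1))
        = ((-1 : ℤ[X]) ^ a * X ^ a + 1) * (((-1 : ℤ[X]) ^ b * X ^ b + 1) *
          ∏ x ∈ (A.erase a).erase b, ((-1 : ℤ[X]) ^ x * X ^ x + 1)) := by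
      rw [← Finset.mul_prod_erase _ _ ha, ← Finset.mul_prod_erase _ _ hbmem]
    have hu : eval 1 ((-1 : ℤ[X]) ^ a * X ^ a + 1) = 0 := by
      simp [hao.neg_one_pow]
    have hP1 : eval 1 (derivative (∏ x ∈ A, ((-1 : ℤ[X]) ^ x * X ^ x + 1))) = 0 := by
      rw [hPfac]
      simp [derivative_mul, hao.neg_one_pow, hbo.neg_one_pow]
    have hQ' := congrArg (fun p => eval 1 (derivative p)) hQ
    simp only [derivative_sub, derivative_mul, derivative_X_pow, derivative_one,
      eval_add, eval_sub, eval_mul, eval_pow, eval_X, eval_one, eval_natCast,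
      eval_intCast, one_pow, mul_one, sub_zero, hP1] at hQ'
    rw [Polynomial.eval_C, Polynomial.eval_C, Polynomial.eval_C] at hQ'
    have hdiff : ((m₀.val : ℤ) - m₁.val) = M * eval 1 Q := by linarith
    have hlt0 : m₀.val < M := ZMod.val_lt m₀
    have hlt1 : m₁.val < M := ZMod.val_lt m₁
    have hzero : ((m₀.val : ℤ) - m₁.val) = 0 := by
      refine Int.eq_zero_of_abs_lt_dvd ⟨eval 1 Q, hdiff⟩ ?_
      rw [abs_sub_lt_iff]
      constructor <;> [skip; skip] <;>
        { have := (Int.ofNat_lt.2 hlt0); have := (Int.ofNat_lt.2 hlt1); omega }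
    have hval : m₀.val = m₁.val := by omega
    exact ZMod.val_injective M hval
  -- ============ Lemma A : find c with M ∣ c ============
  have hdvd2 := key_identity A (fun _ => (1 : (ZMod 2)[X])) M
  have hPred2 : ∑ B ∈ A.powerset, (∏ x ∈ B, (1 : (ZMod 2)[X])) * X ^ ((∑ x ∈ B, x) % M)
      = 0 := by
    rw [← Finset.sum_filter_add_sum_filter_not A.powerset (fun B => Even (∑ x ∈ B, x))]
    have hEpart : ∑ B ∈ E, (∏ x ∈ B, (1 : (ZMod 2)[X])) * X ^ ((∑ x ∈ B, x) % M)
        = (∑ j ∈ (Finset.univ : Finset (ZMod M)), (X : (ZMod 2)[X]) ^ j.val) - X ^ m₀.val := by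
      rw [← sum_image_missing E m₀ himgE hinjE]
      exact Finset.sum_congr rfl (fun B hB => by rw [Finset.prod_const_one, one_mul])
    have hOpart : ∑ B ∈ O, (∏ x ∈ B, (1 : (ZMod 2)[X])) * X ^ ((∑ x ∈ B, x) % M)
        = (∑ j ∈ (Finset.univ : Finset (ZMod M)), (X : (ZMod 2)[X]) ^ j.val) - X ^ m₁.val := by
      rw [← sum_image_missing O m₁ himgO hinjO]
      exact Finset.sum_congr rfl (fun B hB => by rw [Finset.prod_const_one, one_mul])
    rw [hEpart, hOpart, hm01]
    exact CharTwo.add_self_eq_zero _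
  rw [hPred2, sub_zero] at hdvd2
  have hProd : (∏ x ∈ A, ((1:(ZMod 2)[X]) * X ^ x + 1))
      = ∏ x ∈ A, ((X:(ZMod 2)[X]) ^ x + 1) :=
    Finset.prod_congr rfl (fun x _ => by rw [one_mul])
  rw [hProd] at hdvd2
  have hdeg : 0 < (Polynomial.cyclotomic M (ZMod 2)).natDegree := by
    rw [natDegree_cyclotomic]
    exact Nat.totient_pos.2 hMpos
  obtain ⟨f, hfirr, hfdvd⟩ := WfDvdMonoid.exists_irreducible_factor
    (Polynomial.not_isUnit_of_natDegree_pos _ hdeg) (Polynomial.cyclotomic_ne_zero M _)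
  have hfprime : Prime f := hfirr.prime
  have hfXM : f ∣ (X : (ZMod 2)[X]) ^ M - 1 :=
    hfdvd.trans (Polynomial.cyclotomic.dvd_X_pow_sub_one M _)
  obtain ⟨x, hxA, hfx⟩ := hfprime.exists_mem_finset_dvd (hfXM.trans hdvd2)
  have hfx' : f ∣ (X : (ZMod 2)[X]) ^ x - 1 := by
    rw [CharTwo.sub_eq_add]; exact hfx
  have hMx : M ∣ x := by
    by_contra hnd
    have hfg : f ∣ (X : (ZMod 2)[X]) ^ (Nat.gcd x M) - 1 :=
      dvd_X_pow_gcd_sub_one f x M hfx' hfXM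
    set g := Nat.gcd x M with hg
    have hgM : g ∣ M := Nat.gcd_dvd_right x M
    have hgpos : 0 < g := Nat.gcd_pos_of_pos_right x hMpos
    have hgne : g ≠ M := fun h => hnd (h ▸ Nat.gcd_dvd_left x M)
    have hglt : g < M := lt_of_le_of_ne (Nat.le_of_dvd hMpos hgM) hgne
    have hXM : ((X : (ZMod 2)[X]) ^ M - 1)
        = ∏ d ∈ M.divisors, Polynomial.cyclotomic d (ZMod 2) :=
      (Polynomial.prod_cyclotomic_eq_X_pow_sub_one hMpos _).symm
    have hXg : ((X : (ZMod 2)[X]) ^ g - 1)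
        = ∏ d ∈ g.divisors, Polynomial.cyclotomic d (ZMod 2) :=
      (Polynomial.prod_cyclotomic_eq_X_pow_sub_one hgpos _).symm
    have hsub : g.divisors ⊆ M.divisors := Nat.divisors_subset_of_dvd (by omega) hgM
    have hsplit : ((X : (ZMod 2)[X]) ^ M - 1)
        = (∏ d ∈ M.divisors \ g.divisors, Polynomial.cyclotomic d (ZMod 2)) *
          ((X : (ZMod 2)[X]) ^ g - 1) := by
      rw [hXM, hXg, Finset.prod_sdiff hsub]
    have hMmem : M ∈ M.divisors \ g.divisors := by
      rw [Finset.mem_sdiff, Nat.mem_divisors, Nat.mem_divisors]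
      exact ⟨⟨dvd_rfl, by omega⟩, fun h => absurd (Nat.le_of_dvd hgpos h.1) (by omega)⟩
    have hfW : f ∣ ∏ d ∈ M.divisors \ g.divisors, Polynomial.cyclotomic d (ZMod 2) :=
      hfdvd.trans (Finset.dvd_prod_of_mem _ hMmem)
    have hff : f * f ∣ (X : (ZMod 2)[X]) ^ M - 1 := by
      rw [hsplit]; exact mul_dvd_mul hfW hfg
    have hsep : ((X : (ZMod 2)[X]) ^ M - 1).Separable := by
      have hM2 : (M : ZMod 2) ≠ 0 := by
        rw [← ZMod.natCast_mod M 2, Nat.odd_iff.1 hModd]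
        simp
      have := Polynomial.separable_X_pow_sub_C (1 : ZMod 2) hM2 one_ne_zero
      simpa using this
    exact hfirr.not_isUnit (hsep.squarefree f hff)
  refine ⟨x, hxA, ?_⟩
  have hxodd : Odd x := by
    by_contra hxe
    rw [Nat.not_odd_iff_even] at hxe
    have h0 : ({x} : Finset ℕ) = (∅ : Finset ℕ) := by
      refine key {x} (Finset.singleton_subset_iff.2 hxA) ∅ (Finset.empty_subset A) ?_ ?_
      · simp [hxe]
      · simp [(ZMod.natCast_eq_zero_iff x M).2 hMx]
    exact Finset.singleton_ne_empty x h0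
  have h2 : x % 2 = M % 2 := by
    rw [Nat.odd_iff.1 hxodd, Nat.odd_iff.1 hModd]
  have hmodM : x % M = M % M := by
    rw [Nat.mod_self]
    rcases hMx with ⟨k, rfl⟩
    exact Nat.mul_mod_right M k
  have hMod : x ≡ M [MOD 2 * M] :=
    (Nat.modEq_and_modEq_iff_modEq_mul (Nat.coprime_two_left.2 hModd)).1 ⟨h2, hmodM⟩
  calc x % (2 * M) = M % (2 * M) := hMod
  _ = M := Nat.mod_eq_of_lt (by omega)

lemma back_ii (M : ℕ) (hM : 0 < M) (A : Finset ℕ) (c : ℕ) (hc : c ∈ A)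
    (hcm : c % (2 * M) = M) (hSD : SumsetDistinctMod M (A.erase c)) :
    SumsetDistinctMod (2 * M) A := by
  intro B hB C hC h
  have hMc : M ∣ c := by
    have h0 := Nat.div_add_mod c (2 * M)
    rw [hcm] at h0
    exact ⟨2 * (c / (2 * M)) + 1, by
      rw [Nat.mul_add, Nat.mul_one, ← Nat.mul_assoc, Nat.mul_comm M 2]; exact h0.symm⟩
  have hB' : B.erase c ⊆ A.erase c := Finset.erase_subset_erase _ hB
  have hC' : C.erase c ⊆ A.erase c := Finset.erase_subset_erase _ hC
  have hsB : ∑ x ∈ B, x = (∑ x ∈ B.erase c, x) + if c ∈ B then c else 0 := by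
    split
    · next hmem => rw [Finset.sum_erase_add _ _ hmem]
    · next hmem => rw [add_zero, Finset.erase_eq_of_notMem hmem]
  have hsC : ∑ x ∈ C, x = (∑ x ∈ C.erase c, x) + if c ∈ C then c else 0 := by
    split
    · next hmem => rw [Finset.sum_erase_add _ _ hmem]
    · next hmem => rw [add_zero, Finset.erase_eq_of_notMem hmem]
  have hmodM : (∑ x ∈ B.erase c, x) ≡ (∑ x ∈ C.erase c, x) [MOD M] := by
    have h2 : (∑ x ∈ B, x) ≡ (∑ x ∈ C, x) [MOD M] :=
      Nat.ModEq.of_dvd ⟨2, (two_mul M).symm ▸ (mul_comm 2 M)⟩ h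
    have e1 : (∑ x ∈ B, x) ≡ (∑ x ∈ B.erase c, x) [MOD M] := by
      rw [hsB]
      have : M ∣ (if c ∈ B then c else 0) := by split <;> simp [hMc]
      calc (∑ x ∈ B.erase c, x) + (if c ∈ B then c else 0)
          ≡ (∑ x ∈ B.erase c, x) + 0 [MOD M] := Nat.ModEq.add_left _ ((Nat.modEq_zero_iff_dvd).2 this)
        _ = _ := add_zero _
    have e2 : (∑ x ∈ C, x) ≡ (∑ x ∈ C.erase c, x) [MOD M] := by
      rw [hsC]
      have : M ∣ (if c ∈ C then c else 0) := by split <;> simp [hMc]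
      calc (∑ x ∈ C.erase c, x) + (if c ∈ C then c else 0)
          ≡ (∑ x ∈ C.erase c, x) + 0 [MOD M] := Nat.ModEq.add_left _ ((Nat.modEq_zero_iff_dvd).2 this)
        _ = _ := add_zero _
    exact (e1.symm.trans h2).trans e2
  have hBC' : B.erase c = C.erase c := hSD _ hB' _ hC' hmodM
  have hmem : (c ∈ B) = (c ∈ C) := by
    by_contra hne
    have h' : (∑ x ∈ B, x) ≡ (∑ x ∈ C, x) [MOD 2*M] := h
    rw [hsB, hsC, hBC'] at h'
    have hcc : (if c ∈ B then c else 0) ≡ (if c ∈ C then c else 0) [MOD 2*M] :=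
      Nat.ModEq.add_left_cancel' _ h'
    have : c ≡ 0 [MOD 2*M] ∨ (0:ℕ) ≡ c [MOD 2*M] := by
      by_cases hcb : c ∈ B <;> by_cases hcc2 : c ∈ C
      · exact absurd (by simp [hcb, hcc2]) hne
      · left; simpa [hcb, hcc2] using hcc
      · right; simpa [hcb, hcc2] using hcc
      · exact absurd (by simp [hcb, hcc2]) hne
    have hc0 : c % (2*M) = 0 := by
      rcases this with h1 | h1
      · simpa [Nat.ModEq] using h1
      · simpa [Nat.ModEq] using h1.symm
    omega
  ext x
  by_cases hx : x = c
  · subst hx; exact iff_of_eq hmem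
  · constructor <;> intro hxx
    · have : x ∈ B.erase c := Finset.mem_erase.2 ⟨hx, hxx⟩
      rw [hBC'] at this; exact (Finset.mem_erase.1 this).2
    · have : x ∈ C.erase c := Finset.mem_erase.2 ⟨hx, hxx⟩
      rw [← hBC'] at this; exact (Finset.mem_erase.1 this).2

lemma erase_SD (M : ℕ) (hMpos : 0 < M) (hModd : Odd M) (A : Finset ℕ)
    (hSD : SumsetDistinctMod (2 * M) A) (c : ℕ) (hc : c ∈ A) (hcm : c % (2 * M) = M) :
    SumsetDistinctMod M (A.erase c) := by
  intro B hB C hC h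
  have hBA : B ⊆ A := hB.trans (Finset.erase_subset _ _)
  have hCA : C ⊆ A := hC.trans (Finset.erase_subset _ _)
  have hcB : c ∉ B := fun hx => Finset.notMem_erase c A (hB hx)
  have hcC : c ∉ C := fun hx => Finset.notMem_erase c A (hC hx)
  have hceq := Nat.div_add_mod c (2 * M)
  rw [hcm] at hceq
  have hModd' := Nat.odd_iff.1 hModd
  have hceq2 : 2 * (M * (c / (2 * M))) + M = c := by rw [← Nat.mul_assoc]; exact hceq
  have hcodd : c % 2 = 1 := by omega
  have hcM : c % M = 0 := by
    have hc2 : c = M * (2 * (c / (2 * M)) + 1) := by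
      rw [Nat.mul_add, Nat.mul_one, ← Nat.mul_assoc, Nat.mul_comm M 2]
      exact hceq.symm
    rw [hc2]; exact Nat.mul_mod_right M _
  by_cases hpar : (∑ x ∈ B, x) % 2 = (∑ x ∈ C, x) % 2
  · exact hSD B hBA C hCA
      ((Nat.modEq_and_modEq_iff_modEq_mul (Nat.coprime_two_left.2 hModd)).1 ⟨hpar, h⟩)
  · exfalso
    have hsum : ∑ x ∈ insert c B, x = c + ∑ x ∈ B, x := Finset.sum_insert hcB
    have hp2 : (∑ x ∈ insert c B, x) % 2 = (∑ x ∈ C, x) % 2 := by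
      rw [hsum]; omega
    have hpM : (∑ x ∈ insert c B, x) % M = (∑ x ∈ C, x) % M := by
      rw [hsum, Nat.add_mod, hcM, zero_add, Nat.mod_mod_of_dvd _ dvd_rfl]
      exact h
    have := hSD (insert c B) (Finset.insert_subset hc hBA) C hCA
      ((Nat.modEq_and_modEq_iff_modEq_mul (Nat.coprime_two_left.2 hModd)).1 ⟨hp2, hpM⟩)
    rw [← this] at hcC
    exact hcC (Finset.mem_insert_self c B)

lemma halves_SD (M : ℕ) (A : Finset ℕ) (hSD : SumsetDistinctMod (2 * M) A)
    (a : ℕ) (ha : a ∈ A) (hev : ∀ b ∈ A, b ≠ a → Even b) :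
    SumsetDistinctMod M ((A.erase a).image (fun b => b / 2)) := by
  intro B₁ hB₁ C₁ hC₁ h
  have hdouble : ∀ D₁ : Finset ℕ, D₁ ⊆ (A.erase a).image (fun b => b / 2) →
      D₁.image (fun z => 2 * z) ⊆ A.erase a := by
    intro D₁ hD₁ y hy
    rcases Finset.mem_image.1 hy with ⟨z, hz, rfl⟩
    rcases Finset.mem_image.1 (hD₁ hz) with ⟨w, hw, rfl⟩
    have hwe : Even w := hev w (Finset.mem_of_mem_erase hw) (Finset.ne_of_mem_erase hw)
    rcases hwe with ⟨u, hu⟩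
    have : 2 * (w / 2) = w := by omega
    rwa [this]
  have hsumd : ∀ D₁ : Finset ℕ,
      ∑ x ∈ D₁.image (fun z => 2 * z), x = 2 * ∑ z ∈ D₁, z := by
    intro D₁
    rw [Finset.sum_image (fun x _ y _ hxy => by omega), Finset.mul_sum]
  have hmod : (∑ x ∈ B₁.image (fun z => 2 * z), x) ≡
      (∑ x ∈ C₁.image (fun z => 2 * z), x) [MOD 2 * M] := by
    rw [hsumd, hsumd]
    exact Nat.ModEq.mul_left' 2 (h : (∑ z ∈ B₁, z) ≡ (∑ z ∈ C₁, z) [MOD M])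
  have heq := hSD _ ((hdouble B₁ hB₁).trans (Finset.erase_subset _ _)) _
    ((hdouble C₁ hC₁).trans (Finset.erase_subset _ _)) hmod
  have hback : ∀ D₁ : Finset ℕ, (D₁.image (fun z => 2 * z)).image (fun b => b / 2) = D₁ := by
    intro D₁
    rw [Finset.image_image]
    have : ((fun b => b / 2) ∘ fun z => 2 * z) = id := by
      funext z; simp [Nat.mul_div_cancel_left]
    rw [this, Finset.image_id]
  calc B₁ = (B₁.image (fun z => 2 * z)).image (fun b => b / 2) := (hback B₁).symm
  _ = (C₁.image (fun z => 2 * z)).image (fun b => b / 2) := by rw [heq]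
  _ = C₁ := hback C₁

lemma exists_odd_elt (n M : ℕ) (hn : 2 ≤ n) (hM : M = 2 ^ (n - 1) + 1)
    (A : Finset ℕ) (hcard : A.card = n) (hSD : SumsetDistinctMod (2 * M) A) :
    ∃ a ∈ A, Odd a := by
  by_contra hno
  push_neg at hno
  have hev : ∀ a ∈ A, Even a := fun a haa => Nat.not_odd_iff_even.1 (hno a haa)
  have hModd : Odd M := by
    rw [hM, Nat.odd_iff]
    have h1 : 1 ≤ n - 1 := by omega
    rcases Nat.exists_eq_add_of_le h1 with ⟨k, hk⟩
    rw [hk, pow_add, pow_one]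
    omega
  have hMpos : 0 < M := by rw [hM]; exact Nat.succ_pos _
  haveI : NeZero M := ⟨Nat.pos_iff_ne_zero.1 hMpos⟩
  have hinj : ∀ B ∈ A.powerset, ∀ C ∈ A.powerset,
      ((∑ x ∈ B, x : ℕ) : ZMod M) = ((∑ x ∈ C, x : ℕ) : ZMod M) → B = C := by
    intro B hB C hC hmod
    rw [Finset.mem_powerset] at hB hC
    have hBev : Even (∑ x ∈ B, x) := Finset.even_sum _ (fun x hx => hev x (hB hx))
    have hCev : Even (∑ x ∈ C, x) := Finset.even_sum _ (fun x hx => hev x (hC hx))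
    have h2 : (∑ x ∈ B, x) % 2 = (∑ x ∈ C, x) % 2 := by
      rw [Nat.even_iff] at hBev hCev; omega
    have hMM : (∑ x ∈ B, x) ≡ (∑ x ∈ C, x) [MOD M] :=
      (ZMod.natCast_eq_natCast_iff _ _ _).1 hmod
    exact hSD B hB C hC
      ((Nat.modEq_and_modEq_iff_modEq_mul (Nat.coprime_two_left.2 hModd)).1 ⟨h2, hMM⟩)
  have hle : A.powerset.card ≤ (Finset.univ : Finset (ZMod M)).card :=
    Finset.card_le_card_of_injOn _ (fun _ _ => Finset.mem_univ _)
      (fun B hB C hC h => hinj B hB C hC h)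
  rw [Finset.card_powerset, hcard, Finset.card_univ, ZMod.card] at hle
  have hpow : 2 ^ n = 2 * 2 ^ (n - 1) := by
    have hn1 : n - 1 + 1 = n := by omega
    calc 2 ^ n = 2 ^ (n - 1 + 1) := by rw [hn1]
    _ = 2 ^ (n - 1) * 2 := pow_succ 2 (n - 1)
    _ = 2 * 2 ^ (n - 1) := by ring
  have h2n : 2 ≤ 2 ^ (n - 1) := by
    have h1 : 1 ≤ n - 1 := by omega
    calc 2 = 2 ^ 1 := rfl
    _ ≤ 2 ^ (n - 1) := Nat.pow_le_pow_right (by norm_num) h1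
  rw [hpow, hM] at hle
  omega

theorem stmt7 (n : ℕ) (hn : 2 ≤ n) (N : ℕ) (hN : N = 2 ^ n + 2)
    (A : Finset ℕ) (hpos : ∀ a ∈ A, 0 < a) (hcard : A.card = n) :
    SumsetDistinctMod N A ↔
      ((∃ a ∈ A, Odd a ∧ (∀ b ∈ A, b ≠ a → Even b) ∧
          SumsetDistinctMod (N / 2) ((A.erase a).image (fun b => b / 2))) ∨
        (∃ c ∈ A, c % N = N / 2 ∧ SumsetDistinctMod (N / 2) (A.erase c))) := by
  set M := 2 ^ (n - 1) + 1 with hM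
  have hpow : 2 ^ n = 2 * 2 ^ (n - 1) := by
    have hn1 : n - 1 + 1 = n := by omega
    calc 2 ^ n = 2 ^ (n - 1 + 1) := by rw [hn1]
    _ = 2 ^ (n - 1) * 2 := pow_succ 2 (n - 1)
    _ = 2 * 2 ^ (n - 1) := by ring
  have hNM : N = 2 * M := by rw [hN, hM, hpow]; ring
  have hN2 : N / 2 = M := by
    rw [hNM]; exact Nat.mul_div_cancel_left M (by norm_num)
  have hMpos : 0 < M := Nat.succ_pos _
  have hModd : Odd M := by
    rw [hM, Nat.odd_iff]
    have h1 : 1 ≤ n - 1 := by omega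
    rcases Nat.exists_eq_add_of_le h1 with ⟨k, hk⟩
    rw [hk, pow_add, pow_one]
    omega
  rw [hN2, hNM]
  constructor
  · intro hSD
    obtain ⟨a, ha, hao⟩ := exists_odd_elt n M hn hM A hcard hSD
    by_cases h2 : ∃ b ∈ A, Odd b ∧ b ≠ a
    · obtain ⟨b, hb, hbo, hba⟩ := h2
      obtain ⟨c, hc, hcm⟩ := main_k2 n M hn hM A hcard hSD a b ha hb (Ne.symm hba) hao hbo
      exact Or.inr ⟨c, hc, hcm, erase_SD M hMpos hModd A hSD c hc hcm⟩
    · push_neg at h2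
      have hev : ∀ b ∈ A, b ≠ a → Even b := by
        intro b hbA hbne
        by_contra hbe
        exact hbne (h2 b hbA (Nat.not_even_iff_odd.1 hbe))
      exact Or.inl ⟨a, ha, hao, hev, halves_SD M A hSD a ha hev⟩
  · rintro (⟨a, ha, hao, hev, hSD'⟩ | ⟨c, hc, hcm, hSD'⟩)
    · exact back_i M hMpos A a ha hao hev hSD'
    · exact back_ii M hMpos A c hc hcm hSD'
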